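/- Let n, t, f, m be integers with 0 ≤ f ≤ t, n−t ≥ 1, and n−t ≤ m ≤ n. Let c₁,…,c_{n−f} be real numbers (the correct values) and let w₁ ≤ w₂ ≤ … ≤ w_m be a sorted list of m real numbers that contains all of c₁,…,c_{n−f} (counted with multiplicity). Then w_{m−(n−t)+1} ≥ min_i c_i and w_{n−t} ≤ max_i c_i; that is, the interval [w_{m−(n−t)+1}, w_{n−t}] obtained by trimming the m−(n−t) smallest and m−(n−t) largest values is contained in [min_i c_i, max_i c_i]. -/
import Mathlib


/-- If the sorted list `w₁ ≤ … ≤ w_m` (with `n - t ≤ m ≤ n`) contains all `n - f` correct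
values `c₁, …, c_{n-f}` with multiplicity, then the trimmed interval
`[w_{m-(n-t)+1}, w_{n-t}]` is contained in `[min_i c_i, max_i c_i]`. -/
theorem trimmed_interval_subset_trusted_interval (n t f m : ℕ) (hf : f ≤ t)
    (hnt : 1 ≤ n - t) (hm1 : n - t ≤ m) (hm2 : m ≤ n)
    (c : Fin (n - f) → ℝ) (w : ℕ → ℝ)
    (hw : ∀ i j, 1 ≤ i → i ≤ j → j ≤ m → w i ≤ w j)
    (φ : Fin (n - f) → ℕ) (hφinj : Function.Injective φ)
    (hφmem : ∀ i, 1 ≤ φ i ∧ φ i ≤ m) (hφval : ∀ i, w (φ i) = c i) :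
    (⨅ i, c i) ≤ w (m - (n - t) + 1) ∧ w (n - t) ≤ ⨆ i, c i := by
  have hnf : n - t ≤ n - f := Nat.sub_le_sub_left hf n
  have hcard : (Finset.image φ Finset.univ).card = n - f := by
    rw [Finset.card_image_of_injective _ hφinj, Finset.card_univ, Fintype.card_fin]
  -- some correct value at position ≤ m - (n-t) + 1
  have key1 : ∃ i, φ i ≤ m - (n - t) + 1 := by
    by_contra h
    push_neg at h
    have hsub : Finset.image φ Finset.univ ⊆ Finset.Ioc (m - (n - t) + 1) m := by
      intro x hx
      simp only [Finset.mem_image, Finset.mem_univ, true_and] at hx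
      obtain ⟨i, rfl⟩ := hx
      exact Finset.mem_Ioc.mpr ⟨h i, (hφmem i).2⟩
    have := Finset.card_le_card hsub
    rw [hcard, Nat.card_Ioc] at this
    omega
  -- some correct value at position ≥ n - t
  have key2 : ∃ i, n - t ≤ φ i := by
    by_contra h
    push_neg at h
    have hsub : Finset.image φ Finset.univ ⊆ Finset.Ico 1 (n - t) := by
      intro x hx
      simp only [Finset.mem_image, Finset.mem_univ, true_and] at hx
      obtain ⟨i, rfl⟩ := hx
      exact Finset.mem_Ico.mpr ⟨(hφmem i).1, h i⟩
    have := Finset.card_le_card hsub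
    rw [hcard, Nat.card_Ico] at this
    omega
  obtain ⟨i₁, hi₁⟩ := key1
  obtain ⟨i₂, hi₂⟩ := key2
  have hbb : BddBelow (Set.range c) := (Set.finite_range c).bddBelow
  have hba : BddAbove (Set.range c) := (Set.finite_range c).bddAbove
  constructor
  · calc (⨅ i, c i) ≤ c i₁ := ciInf_le hbb i₁
      _ = w (φ i₁) := (hφval i₁).symm
      _ ≤ w (m - (n - t) + 1) := hw _ _ (hφmem i₁).1 hi₁ (by omega)
  · calc w (n - t) ≤ w (φ i₂) := hw _ _ (by omega) hi₂ (hφmem i₂).2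
      _ = c i₂ := hφval i₂
      _ ≤ ⨆ i, c i := le_ciSup hba i₂
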